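/- Let N_{1|0} : M_{d₀}(ℂ) → M_{d₁}(ℂ) and N_{2|0} : M_{d₀}(ℂ) → M_{d₂}(ℂ) be completely positive trace-preserving maps, with ϱ_{1|0} and ϱ_{2|0} the partial transposes on the first factor of their Jamiołkowski images. Then there exists a completely positive trace-preserving intermediate map N_{2|1} : M_{d₁}(ℂ) → M_{d₂}(ℂ) with N_{2|0} = N_{2|1} ∘ N_{1|0} if and only if there exists a positive semidefinite matrix ϱ_{2|1} ∈ M_{d₁}(ℂ) ⊗ M_{d₂}(ℂ) with Tr_{H₂}[ϱ_{2|1}] = 𝟙_{d₁} such that ϱ_{2|0} = Tr_{H₁}[ (𝟙_{d₀} ⊗ ϱ_{2|1})^{T_{H₁}} (ϱ_{1|0} ⊗ 𝟙_{d₂}) ], where T_{H₁} denotes partial transposition on the middle factor of M_{d₀}(ℂ) ⊗ M_{d₁}(ℂ) ⊗ M_{d₂}(ℂ) and Tr_{H₁}, Tr_{H₂} are partial traces over the indicated factors. -/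

import Mathlib

open Matrix Kronecker
open scoped ComplexOrder

noncomputable section

/-- Jamiołkowski image of a linear map `N : M_a(ℂ) → M_b(ℂ)`:
`ρ = Σ_{i,j} |i⟩⟨j| ⊗ N(|j⟩⟨i|)`. -/
def jamImage {a b : ℕ} (N : Matrix (Fin a) (Fin a) ℂ →ₗ[ℂ] Matrix (Fin b) (Fin b) ℂ) :
    Matrix (Fin a × Fin b) (Fin a × Fin b) ℂ :=
  ∑ i : Fin a, ∑ j : Fin a,
    Matrix.single i j (1 : ℂ) ⊗ₖ N (Matrix.single j i (1 : ℂ))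

/-- Partial transpose on the first tensor factor of `M_a(ℂ) ⊗ M_b(ℂ)`. -/
def ptransposeA {a b : ℕ} (ρ : Matrix (Fin a × Fin b) (Fin a × Fin b) ℂ) :
    Matrix (Fin a × Fin b) (Fin a × Fin b) ℂ :=
  Matrix.of fun p q => ρ (q.1, p.2) (p.1, q.2)

/-- Partial trace over the second tensor factor. -/
def ptraceB {a b : ℕ} (ρ : Matrix (Fin a × Fin b) (Fin a × Fin b) ℂ) :
    Matrix (Fin a) (Fin a) ℂ :=
  Matrix.of fun i j => ∑ k : Fin b, ρ (i, k) (j, k)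

/-- Partial trace over the first tensor factor. -/
def ptraceA {a b : ℕ} (ρ : Matrix (Fin a × Fin b) (Fin a × Fin b) ℂ) :
    Matrix (Fin b) (Fin b) ℂ :=
  Matrix.of fun k l => ∑ i : Fin a, ρ (i, k) (i, l)

/-- The extension `id_n ⊗ Φ` of a map `Φ` on matrices, acting on `M_n(ℂ) ⊗ M_a(ℂ)`. -/
def idTensor {n a b : ℕ} (Φ : Matrix (Fin a) (Fin a) ℂ → Matrix (Fin b) (Fin b) ℂ)
    (X : Matrix (Fin n × Fin a) (Fin n × Fin a) ℂ) :
    Matrix (Fin n × Fin b) (Fin n × Fin b) ℂ :=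
  Matrix.of fun p q => Φ (Matrix.of fun i j => X (p.1, i) (q.1, j)) p.2 q.2

/-- Complete positivity: every identity extension `id_n ⊗ Φ` preserves positive
semidefiniteness. -/
def IsCP {a b : ℕ} (Φ : Matrix (Fin a) (Fin a) ℂ → Matrix (Fin b) (Fin b) ℂ) : Prop :=
  ∀ (n : ℕ) (X : Matrix (Fin n × Fin a) (Fin n × Fin a) ℂ),
    X.PosSemidef → (idTensor Φ X).PosSemidef

/-- Trace preservation. -/
def IsTP {a b : ℕ} (Φ : Matrix (Fin a) (Fin a) ℂ → Matrix (Fin b) (Fin b) ℂ) : Prop :=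
  ∀ σ, (Φ σ).trace = σ.trace

/-- Embedding `𝟙_{d₀} ⊗ B` of `B ∈ M_{d₁}(ℂ) ⊗ M_{d₂}(ℂ)` into the three-factor space. -/
def emb12 {d₀ d₁ d₂ : ℕ} (B : Matrix (Fin d₁ × Fin d₂) (Fin d₁ × Fin d₂) ℂ) :
    Matrix (Fin d₀ × Fin d₁ × Fin d₂) (Fin d₀ × Fin d₁ × Fin d₂) ℂ :=
  (1 : Matrix (Fin d₀) (Fin d₀) ℂ) ⊗ₖ B

/-- Embedding `B ⊗ 𝟙_{d₂}` of `B ∈ M_{d₀}(ℂ) ⊗ M_{d₁}(ℂ)` into the three-factor space. -/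
def emb01 {d₀ d₁ d₂ : ℕ} (B : Matrix (Fin d₀ × Fin d₁) (Fin d₀ × Fin d₁) ℂ) :
    Matrix (Fin d₀ × Fin d₁ × Fin d₂) (Fin d₀ × Fin d₁ × Fin d₂) ℂ :=
  Matrix.of fun p q => B (p.1, p.2.1) (q.1, q.2.1) * (if p.2.2 = q.2.2 then 1 else 0)

/-- Partial transposition on the middle factor of the three-factor space. -/
def ptransposeMid {d₀ d₁ d₂ : ℕ}
    (A : Matrix (Fin d₀ × Fin d₁ × Fin d₂) (Fin d₀ × Fin d₁ × Fin d₂) ℂ) :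
    Matrix (Fin d₀ × Fin d₁ × Fin d₂) (Fin d₀ × Fin d₁ × Fin d₂) ℂ :=
  Matrix.of fun p q => A (p.1, q.2.1, p.2.2) (q.1, p.2.1, q.2.2)

/-- Partial trace over the middle factor of the three-factor space. -/
def ptraceMid {d₀ d₁ d₂ : ℕ}
    (A : Matrix (Fin d₀ × Fin d₁ × Fin d₂) (Fin d₀ × Fin d₁ × Fin d₂) ℂ) :
    Matrix (Fin d₀ × Fin d₂) (Fin d₀ × Fin d₂) ℂ :=
  Matrix.of fun p q => ∑ m : Fin d₁, A (p.1, m, p.2) (q.1, m, q.2)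

/-- The link-product composition
`Tr_{H₁}[ (𝟙_{d₀} ⊗ ϱ_{2|1})^{T_{H₁}} (ϱ_{1|0} ⊗ 𝟙_{d₂}) ]`. -/
def linkProd {d₀ d₁ d₂ : ℕ} (ϱ10 : Matrix (Fin d₀ × Fin d₁) (Fin d₀ × Fin d₁) ℂ)
    (ϱ21 : Matrix (Fin d₁ × Fin d₂) (Fin d₁ × Fin d₂) ℂ) :
    Matrix (Fin d₀ × Fin d₂) (Fin d₀ × Fin d₂) ℂ :=
  ptraceMid (ptransposeMid (emb12 ϱ21) * emb01 ϱ10)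

section Aux

open Matrix

variable {a b c : ℕ}

/-- Choi matrix of a linear map. -/
def choi (N : Matrix (Fin a) (Fin a) ℂ →ₗ[ℂ] Matrix (Fin b) (Fin b) ℂ) :
    Matrix (Fin a × Fin b) (Fin a × Fin b) ℂ := ptransposeA (jamImage N)

lemma choi_apply (N : Matrix (Fin a) (Fin a) ℂ →ₗ[ℂ] Matrix (Fin b) (Fin b) ℂ)
    (i j : Fin a) (k l : Fin b) :
    choi N (i, k) (j, l) = N (single i j 1) k l := by
  simp [choi, ptransposeA, jamImage, Matrix.sum_apply, Matrix.kroneckerMap_apply,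
    single, ite_and, Finset.sum_ite_eq, Finset.sum_ite_eq']

/-- Every linear map is determined by its Choi matrix. -/
lemma apply_eq_sum (N : Matrix (Fin a) (Fin a) ℂ →ₗ[ℂ] Matrix (Fin b) (Fin b) ℂ)
    (X : Matrix (Fin a) (Fin a) ℂ) (k l : Fin b) :
    N X k l = ∑ i : Fin a, ∑ j : Fin a, X i j * choi N (i, k) (j, l) := by
  conv_lhs => rw [matrix_eq_sum_single X]
  rw [map_sum, Matrix.sum_apply]
  refine Finset.sum_congr rfl fun i _ => ?_
  rw [map_sum, Matrix.sum_apply]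
  refine Finset.sum_congr rfl fun j _ => ?_
  have : single i j (X i j) = (X i j) • single i j (1:ℂ) := by
    rw [smul_single, smul_eq_mul, mul_one]
  rw [this, _root_.map_smul, choi_apply]
  simp [smul_eq_mul]

lemma choi_inj {N M : Matrix (Fin a) (Fin a) ℂ →ₗ[ℂ] Matrix (Fin b) (Fin b) ℂ}
    (h : choi N = choi M) : N = M := by
  ext X k l
  rw [apply_eq_sum, apply_eq_sum, h]

/-- The map reconstructed from a Choi-type matrix. -/
def ofChoi (ϱ : Matrix (Fin a × Fin b) (Fin a × Fin b) ℂ) :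
    Matrix (Fin a) (Fin a) ℂ →ₗ[ℂ] Matrix (Fin b) (Fin b) ℂ where
  toFun X := Matrix.of fun k l => ∑ i : Fin a, ∑ j : Fin a, X i j * ϱ (i, k) (j, l)
  map_add' X Y := by
    ext k l
    simp [add_mul, Finset.sum_add_distrib]
  map_smul' r X := by
    ext k l
    simp [Finset.mul_sum, mul_assoc]

lemma ofChoi_apply (ϱ : Matrix (Fin a × Fin b) (Fin a × Fin b) ℂ)
    (X : Matrix (Fin a) (Fin a) ℂ) (k l : Fin b) :
    ofChoi ϱ X k l = ∑ i : Fin a, ∑ j : Fin a, X i j * ϱ (i, k) (j, l) := rfl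

lemma choi_ofChoi (ϱ : Matrix (Fin a × Fin b) (Fin a × Fin b) ℂ) :
    choi (ofChoi ϱ) = ϱ := by
  ext ⟨i, k⟩ ⟨j, l⟩
  rw [choi_apply, ofChoi_apply]
  simp [single, ite_and, Finset.sum_ite_eq, Finset.sum_ite_eq']

/-- Trace preservation in terms of the Choi matrix. -/
lemma isTP_iff (N : Matrix (Fin a) (Fin a) ℂ →ₗ[ℂ] Matrix (Fin b) (Fin b) ℂ) :
    IsTP ⇑N ↔ ptraceB (choi N) = 1 := by
  constructor
  · intro h
    ext i j
    have := h (single i j 1)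
    simp only [Matrix.trace, Matrix.diag] at this
    simp only [ptraceB, Matrix.of_apply]
    have h2 : ∀ k : Fin b, choi N (i, k) (j, k) = N (single i j 1) k k :=
      fun k => choi_apply N i j k k
    rw [Finset.sum_congr rfl (fun k _ => h2 k), this]
    simp [single, ite_and, Finset.sum_ite_eq, Matrix.one_apply, eq_comm]
  · intro h X
    simp only [Matrix.trace, Matrix.diag]
    calc ∑ k : Fin b, N X k k
        = ∑ k : Fin b, ∑ i : Fin a, ∑ j : Fin a, X i j * choi N (i, k) (j, k) := by
          exact Finset.sum_congr rfl fun k _ => apply_eq_sum N X k k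
      _ = ∑ i : Fin a, ∑ j : Fin a, X i j * ∑ k : Fin b, choi N (i, k) (j, k) := by
          rw [Finset.sum_comm]
          refine Finset.sum_congr rfl fun i _ => ?_
          rw [Finset.sum_comm]
          exact Finset.sum_congr rfl fun j _ => (Finset.mul_sum _ _ _).symm
      _ = ∑ i : Fin a, X i i := by
          refine Finset.sum_congr rfl fun i _ => ?_
          have : ∀ j, (∑ k : Fin b, choi N (i, k) (j, k)) = (1 : Matrix (Fin a) (Fin a) ℂ) i j :=
            fun j => by rw [← h]; rfl
          simp only [this]
          simp [Matrix.one_apply]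

/-- The maximally entangled (unnormalized) state. -/
def omega (a : ℕ) : Matrix (Fin a × Fin a) (Fin a × Fin a) ℂ :=
  Matrix.of fun p q => (if p.1 = p.2 then 1 else 0) * (if q.1 = q.2 then 1 else 0)

lemma omega_posSemidef : (omega a).PosSemidef := by
  have h : omega a
      = Matrix.replicateCol (Fin 1) (fun p : Fin a × Fin a => if p.1 = p.2 then (1:ℂ) else 0)
        * (Matrix.replicateCol (Fin 1) (fun p : Fin a × Fin a => if p.1 = p.2 then (1:ℂ) else 0))ᴴ := by
    ext p q
    simp only [omega, Matrix.of_apply, Matrix.mul_apply, Matrix.conjTranspose_apply,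
      Matrix.replicateCol_apply, Finset.univ_unique, Finset.sum_singleton]
    rcases eq_or_ne p.1 p.2 with h1 | h1 <;> rcases eq_or_ne q.1 q.2 with h2 | h2 <;>
      simp [h1, h2]
  rw [h]
  exact Matrix.posSemidef_self_mul_conjTranspose _

lemma idTensor_omega (N : Matrix (Fin a) (Fin a) ℂ →ₗ[ℂ] Matrix (Fin b) (Fin b) ℂ) :
    idTensor ⇑N (omega a) = choi N := by
  ext ⟨i, k⟩ ⟨j, l⟩
  rw [choi_apply]
  show N (Matrix.of fun i' j' => omega a (i, i') (j, j')) k l = _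
  have h : (Matrix.of fun i' j' => omega a (i, i') (j, j')) = single i j (1:ℂ) := by
    ext i' j'
    rcases eq_or_ne i i' with h1 | h1 <;> rcases eq_or_ne j j' with h2 | h2 <;>
      simp [omega, single, h1, h2]
  rw [h]

lemma isCP_choi_posSemidef {N : Matrix (Fin a) (Fin a) ℂ →ₗ[ℂ] Matrix (Fin b) (Fin b) ℂ}
    (h : IsCP ⇑N) : (choi N).PosSemidef := by
  have := h a (omega a) omega_posSemidef
  rwa [idTensor_omega] at this

lemma posSemidef_sum {n : Type*} [Fintype n] {ι : Type*} (s : Finset ι)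
    (f : ι → Matrix n n ℂ) (h : ∀ i ∈ s, (f i).PosSemidef) :
    (∑ i ∈ s, f i).PosSemidef := by
  classical
  induction s using Finset.induction_on with
  | empty => simpa using Matrix.PosSemidef.zero
  | insert x s hni ih =>
    rw [Finset.sum_insert hni]
    exact (h x (Finset.mem_insert_self x s)).add
      (ih fun i hi => h i (Finset.mem_insert_of_mem hi))

lemma isCP_ofChoi {ϱ : Matrix (Fin a × Fin b) (Fin a × Fin b) ℂ}
    (h : ϱ.PosSemidef) : IsCP ⇑(ofChoi ϱ) := by
  obtain ⟨B, hB⟩ : ∃ B : Matrix (Fin a × Fin b) (Fin a × Fin b) ℂ, ϱ = Bᴴ * B := by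
    open scoped MatrixOrder in exact CStarAlgebra.nonneg_iff_eq_star_mul_self.mp h.nonneg
  intro n X hX
  set M : (Fin a × Fin b) → Matrix (Fin n × Fin b) (Fin n × Fin a) ℂ :=
    fun s => Matrix.of fun p q => if p.1 = q.1 then star (B s (q.2, p.2)) else 0 with hM
  have entry : ∀ (s : Fin a × Fin b) (p q : Fin n) (k l : Fin b),
      (M s * X * (M s)ᴴ) (p, k) (q, l)
        = ∑ i : Fin a, ∑ j : Fin a, star (B s (i, k)) * (X (p, i) (q, j) * B s (j, l)) := by
    intro s p q k l
    simp only [hM, Matrix.mul_apply, Matrix.conjTranspose_apply, Matrix.of_apply,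
      Fintype.sum_prod_type, ite_mul, mul_ite, zero_mul, mul_zero, apply_ite (star : ℂ → ℂ),
      star_zero, star_star, Finset.sum_ite_eq, Finset.mem_univ, if_true, Finset.sum_ite_eq',
      Finset.sum_ite_irrel, Finset.sum_const_zero]
    simp only [Finset.sum_mul]
    rw [Finset.sum_comm]
    exact Finset.sum_congr rfl fun i _ => Finset.sum_congr rfl fun j _ => by ring
  have key : idTensor ⇑(ofChoi ϱ) X = ∑ s : Fin a × Fin b, M s * X * (M s)ᴴ := by
    ext ⟨p, k⟩ ⟨q, l⟩
    rw [Matrix.sum_apply]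
    calc idTensor ⇑(ofChoi ϱ) X (p, k) (q, l)
        = ∑ i : Fin a, ∑ j : Fin a, X (p, i) (q, j) * ϱ (i, k) (j, l) := rfl
      _ = ∑ i : Fin a, ∑ j : Fin a, ∑ s : Fin a × Fin b,
            star (B s (i, k)) * (X (p, i) (q, j) * B s (j, l)) := by
          refine Finset.sum_congr rfl fun i _ => Finset.sum_congr rfl fun j _ => ?_
          rw [hB, Matrix.mul_apply, Finset.mul_sum]
          refine Finset.sum_congr rfl fun s _ => ?_
          simp only [Matrix.conjTranspose_apply]
          ring
      _ = ∑ s : Fin a × Fin b, ∑ i : Fin a, ∑ j : Fin a,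
            star (B s (i, k)) * (X (p, i) (q, j) * B s (j, l)) := by
          exact Eq.trans (Finset.sum_congr rfl fun i _ => Finset.sum_comm) Finset.sum_comm
      _ = ∑ s : Fin a × Fin b, (M s * X * (M s)ᴴ) (p, k) (q, l) :=
          Finset.sum_congr rfl fun s _ => (entry s p q k l).symm
  rw [key]
  exact posSemidef_sum _ _ fun s _ => hX.mul_mul_conjTranspose_same (M s)

lemma isTP_ofChoi {ϱ : Matrix (Fin a × Fin b) (Fin a × Fin b) ℂ}
    (h : ptraceB ϱ = 1) : IsTP ⇑(ofChoi ϱ) := by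
  rw [isTP_iff, choi_ofChoi]
  exact h

/-- Entrywise formula for the link product. -/
lemma linkProd_apply {d₀ d₁ d₂ : ℕ} (ϱ10 : Matrix (Fin d₀ × Fin d₁) (Fin d₀ × Fin d₁) ℂ)
    (ϱ21 : Matrix (Fin d₁ × Fin d₂) (Fin d₁ × Fin d₂) ℂ) (i j : Fin d₀) (k l : Fin d₂) :
    linkProd ϱ10 ϱ21 (i, k) (j, l)
      = ∑ m : Fin d₁, ∑ n : Fin d₁, ϱ10 (i, m) (j, n) * ϱ21 (m, k) (n, l) := by
  simp only [linkProd, ptraceMid, ptransposeMid, emb12, emb01, Matrix.of_apply,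
    Matrix.mul_apply, Matrix.kroneckerMap_apply, Matrix.one_apply, Fintype.sum_prod_type,
    ite_mul, mul_ite, one_mul, zero_mul, mul_one, mul_zero, Finset.sum_ite_eq,
    Finset.sum_ite_eq', Finset.sum_ite_irrel, Finset.sum_const_zero, Finset.mem_univ, if_true]
  rw [Finset.sum_comm]
  exact Finset.sum_congr rfl fun m _ => Finset.sum_congr rfl fun n _ => mul_comm _ _

lemma choi_comp {d₀ d₁ d₂ : ℕ}
    (N10 : Matrix (Fin d₀) (Fin d₀) ℂ →ₗ[ℂ] Matrix (Fin d₁) (Fin d₁) ℂ)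
    (N21 : Matrix (Fin d₁) (Fin d₁) ℂ →ₗ[ℂ] Matrix (Fin d₂) (Fin d₂) ℂ) :
    choi (N21 ∘ₗ N10) = linkProd (choi N10) (choi N21) := by
  ext ⟨i, k⟩ ⟨j, l⟩
  rw [choi_apply, linkProd_apply, LinearMap.comp_apply, apply_eq_sum N21]
  exact Finset.sum_congr rfl fun m _ => Finset.sum_congr rfl fun n _ => by rw [choi_apply N10 i j m n]

end Aux


/-- a CPTP intermediate map `N_{2|1}` with `N_{2|0} = N_{2|1} ∘ N_{1|0}`
exists iff there is a positive semidefinite `ϱ_{2|1}` with `Tr_{H₂}[ϱ_{2|1}] = 𝟙_{d₁}`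
satisfying `ϱ_{2|0} = Tr_{H₁}[ (𝟙_{d₀} ⊗ ϱ_{2|1})^{T_{H₁}} (ϱ_{1|0} ⊗ 𝟙_{d₂}) ]`. -/
theorem statement6 {d₀ d₁ d₂ : ℕ}
    (N10 : Matrix (Fin d₀) (Fin d₀) ℂ →ₗ[ℂ] Matrix (Fin d₁) (Fin d₁) ℂ)
    (N20 : Matrix (Fin d₀) (Fin d₀) ℂ →ₗ[ℂ] Matrix (Fin d₂) (Fin d₂) ℂ)
    (h10 : IsCP ⇑N10 ∧ IsTP ⇑N10)
    (h20 : IsCP ⇑N20 ∧ IsTP ⇑N20) :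
    (∃ N21 : Matrix (Fin d₁) (Fin d₁) ℂ →ₗ[ℂ] Matrix (Fin d₂) (Fin d₂) ℂ,
        IsCP ⇑N21 ∧ IsTP ⇑N21 ∧ N20 = N21 ∘ₗ N10) ↔
      (∃ ϱ21 : Matrix (Fin d₁ × Fin d₂) (Fin d₁ × Fin d₂) ℂ,
        ϱ21.PosSemidef ∧ ptraceB ϱ21 = 1 ∧
          ptransposeA (jamImage N20) = linkProd (ptransposeA (jamImage N10)) ϱ21) := by
  constructor
  · rintro ⟨N21, hCP, hTP, hcomp⟩
    refine ⟨choi N21, isCP_choi_posSemidef hCP, (isTP_iff N21).mp hTP, ?_⟩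
    show choi N20 = linkProd (choi N10) (choi N21)
    rw [hcomp]
    exact choi_comp N10 N21
  · rintro ⟨ϱ21, hpsd, htr, heq⟩
    refine ⟨ofChoi ϱ21, isCP_ofChoi hpsd, isTP_ofChoi htr, ?_⟩
    apply choi_inj
    rw [choi_comp, choi_ofChoi]
    exact heq
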